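/- Let λ > 0, σ > 0, d ∈ (0,1/2), and let ℓ : ℝ → ℝ be a continuous function of bounded p-variation on compacts for some p ∈ (0,2) satisfying the Langevin integral equation ℓ(t) − ℓ(s) = −λ∫_s^t ℓ(u) du + g(t) − g(s) for all s ≤ t, where g is continuous of bounded p-variation on compacts. Define Z(t) := (σ ℓ(t))². Then Z satisfies, for all s ≤ t, Z(t) − Z(s) = −2λ ∫_s^t Z(u) du + 2σ ∫_s^t √(Z(u)) · sign(ℓ(u)) dg(u), and in particular if ℓ ≥ 0 on [s,t], Z(t) − Z(s) = −2λ∫_s^t Z(u)du + 2σ∫_s^t √(Z(u)) dg(u). -/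

import Mathlib

open MeasureTheory Real Set

noncomputable section

/-- `x 0, …, x n` is a partition of `[a,b]`. -/
def IsPartition (a b : ℝ) (n : ℕ) (x : ℕ → ℝ) : Prop :=
  x 0 = a ∧ x n = b ∧ ∀ i < n, x i < x (i + 1)

/-- `f` has bounded `p`-variation on `[a,b]`. -/
def pVarBdd (p : ℝ) (f : ℝ → ℝ) (a b : ℝ) : Prop :=
  ∃ C : ℝ, ∀ n : ℕ, ∀ x : ℕ → ℝ, IsPartition a b n x →
    ∑ i ∈ Finset.range n, |f (x (i + 1)) - f (x i)| ^ p ≤ C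

/-- Riemann–Stieltjes sum of `f` against the integrator `h`. -/
def RSSum (f h : ℝ → ℝ) (n : ℕ) (x y : ℕ → ℝ) : ℝ :=
  ∑ i ∈ Finset.range n, f (y i) * (h (x (i + 1)) - h (x i))

/-- The Riemann–Stieltjes integral of `f` w.r.t. `h` over `[a,b]` exists and equals `I`. -/
def RSInteg (f h : ℝ → ℝ) (a b I : ℝ) : Prop :=
  ∀ ε > 0, ∃ δ > 0, ∀ n : ℕ, ∀ x y : ℕ → ℝ,
    IsPartition a b n x → (∀ i < n, x (i + 1) - x i < δ) →
    (∀ i < n, x i ≤ y i ∧ y i ≤ x (i + 1)) →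
    |RSSum f h n x y - I| < ε

/-! ### Auxiliary lemmas -/

lemma partition_mono {a b : ℝ} {n : ℕ} {x : ℕ → ℝ} (h : IsPartition a b n x) :
    ∀ j ≤ n, ∀ i ≤ j, x i ≤ x j := by
  have H : ∀ k : ℕ, ∀ i : ℕ, i + k ≤ n → x i ≤ x (i + k) := by
    intro k
    induction k with
    | zero => intro i _; simp
    | succ k ih =>
      intro i hik
      calc x i ≤ x (i + k) := ih i (by omega)
        _ ≤ x (i + k + 1) := (h.2.2 (i + k) (by omega)).le
  intro j hj i hij
  have := H (j - i) i (by omega)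
  rwa [show i + (j - i) = j by omega] at this

lemma sum_range_two_mul' (F : ℕ → ℝ) (n : ℕ) :
    ∑ i ∈ Finset.range (2 * n), F i = ∑ i ∈ Finset.range n, (F (2 * i) + F (2 * i + 1)) := by
  induction n with
  | zero => simp
  | succ n ih =>
    have h2 : 2 * (n + 1) = (2 * n + 1) + 1 := by ring
    rw [Finset.sum_range_succ, ← ih, h2, Finset.sum_range_succ, Finset.sum_range_succ]
    ring

lemma sum_drop (F : ℕ → ℝ) (m j : ℕ) (hj : j < m) (hFj : F j = 0) :
    ∑ i ∈ Finset.range (m - 1), (if i < j then F i else F (i + 1))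
      = ∑ i ∈ Finset.range m, F i := by
  have hjm : j ≤ m - 1 := by omega
  rw [Finset.range_eq_Ico, ← Finset.sum_Ico_consecutive _ (Nat.zero_le j) hjm]
  rw [Finset.range_eq_Ico, ← Finset.sum_Ico_consecutive (f := F) (Nat.zero_le j) hj.le]
  congr 1
  · exact Finset.sum_congr rfl fun i hi => if_pos (Finset.mem_Ico.mp hi).2
  · have h1 : ∑ i ∈ Finset.Ico j (m - 1), (if i < j then F i else F (i + 1))
        = ∑ i ∈ Finset.Ico j (m - 1), F (i + 1) :=
      Finset.sum_congr rfl fun i hi => if_neg (by have := (Finset.mem_Ico.mp hi).1; omega)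
    rw [h1, Finset.sum_eq_sum_Ico_succ_bot hj F, hFj, zero_add,
      Finset.sum_Ico_eq_sum_range, Finset.sum_Ico_eq_sum_range,
      show m - 1 - j = m - (j + 1) by omega]
    exact Finset.sum_congr rfl fun i _ => by congr 1; omega

lemma mono_pvar (f : ℝ → ℝ) (p : ℝ) (hp : 0 < p) (a b C : ℝ)
    (hC : ∀ n : ℕ, ∀ x : ℕ → ℝ, IsPartition a b n x →
        ∑ i ∈ Finset.range n, |f (x (i + 1)) - f (x i)| ^ p ≤ C) :
    ∀ m : ℕ, ∀ z : ℕ → ℝ, z 0 = a → z m = b → (∀ i < m, z i ≤ z (i + 1)) →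
      ∑ i ∈ Finset.range m, |f (z (i + 1)) - f (z i)| ^ p ≤ C := by
  intro m
  induction m using Nat.strong_induction_on with
  | _ m ih =>
    intro z h0 hm hmono
    by_cases hstrict : ∀ i < m, z i < z (i + 1)
    · exact hC m z ⟨h0, hm, hstrict⟩
    push_neg at hstrict
    obtain ⟨j, hjm, hje⟩ := hstrict
    have hzj : z j = z (j + 1) := le_antisymm (hmono j hjm) hje
    have hm0 : 0 < m := by omega
    set z' : ℕ → ℝ := fun i => if i < j + 1 then z i else z (i + 1) with hz'
    have hz'0 : z' 0 = a := by simp only [hz', if_pos (Nat.succ_pos j)]; exact h0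
    have hz'm : z' (m - 1) = b := by
      by_cases h : m - 1 < j + 1
      · have hjeq : j = m - 1 := by omega
        simp only [hz', if_pos h]
        rw [show m - 1 = j from hjeq.symm, hzj, show j + 1 = m by omega, hm]
      · simp only [hz', if_neg h, show m - 1 + 1 = m by omega, hm]
    have hz'mono : ∀ i < m - 1, z' i ≤ z' (i + 1) := by
      intro i hi
      by_cases h1 : i + 1 < j + 1
      · simp only [hz', if_pos (by omega : i < j + 1), if_pos h1]
        exact hmono i (by omega)
      by_cases h2 : i < j + 1
      · -- i = j
        have hij : i = j := by omega
        subst hij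
        simp only [hz', if_pos h2, if_neg h1]
        rw [hzj]
        exact hmono (i + 1) (by omega)
      · simp only [hz', if_neg h2, if_neg (by omega : ¬ i + 1 < j + 1)]
        exact hmono (i + 1) (by omega)
    have hkey := ih (m - 1) (by omega) z' hz'0 hz'm hz'mono
    have hFj : |f (z (j + 1)) - f (z j)| ^ p = 0 := by
      rw [hzj, sub_self, abs_zero, Real.zero_rpow (ne_of_gt hp)]
    have heq : ∀ i, |f (z' (i + 1)) - f (z' i)| ^ p
        = if i < j then |f (z (i + 1)) - f (z i)| ^ p
          else |f (z (i + 1 + 1)) - f (z (i + 1))| ^ p := by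
      intro i
      by_cases h1 : i < j
      · rw [if_pos h1]
        simp only [hz', if_pos (by omega : i < j + 1), if_pos (by omega : i + 1 < j + 1)]
      rw [if_neg h1]
      by_cases h2 : i = j
      · subst h2
        simp only [hz', if_pos (by omega : i < i + 1), if_neg (lt_irrefl (i + 1))]
        rw [hzj]
      · simp only [hz', if_neg (by omega : ¬ i < j + 1), if_neg (by omega : ¬ i + 1 < j + 1)]
    calc ∑ i ∈ Finset.range m, |f (z (i + 1)) - f (z i)| ^ p
        = ∑ i ∈ Finset.range (m - 1),
            (if i < j then |f (z (i + 1)) - f (z i)| ^ p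
              else |f (z (i + 1 + 1)) - f (z (i + 1))| ^ p) :=
          (sum_drop (fun i => |f (z (i + 1)) - f (z i)| ^ p) m j hjm hFj).symm
      _ = ∑ i ∈ Finset.range (m - 1), |f (z' (i + 1)) - f (z' i)| ^ p :=
          Finset.sum_congr rfl fun i _ => (heq i).symm
      _ ≤ C := hkey

lemma RSInteg_congr {f f' h : ℝ → ℝ} {a b I : ℝ}
    (hff' : ∀ u ∈ Set.Icc a b, f u = f' u) (hf : RSInteg f h a b I) :
    RSInteg f' h a b I := by
  intro ε hε
  obtain ⟨δ, hδ, H⟩ := hf ε hε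
  refine ⟨δ, hδ, fun n x y hp hm ht => ?_⟩
  have hxmono := partition_mono hp
  have heq : RSSum f' h n x y = RSSum f h n x y := by
    refine Finset.sum_congr rfl fun i hi => ?_
    have hi' := Finset.mem_range.mp hi
    have hy : y i ∈ Set.Icc a b := by
      constructor
      · rw [← hp.1]; exact le_trans (hxmono i hi'.le 0 (Nat.zero_le _)) (ht i hi').1
      · rw [← hp.2.1]; exact le_trans (ht i hi').2 (hxmono n le_rfl (i + 1) hi')
    rw [hff' (y i) hy]
  rw [heq]
  exact H n x y hp hm ht

set_option maxHeartbeats 2000000 in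
lemma key_RSInteg (lam σ p : ℝ) (hlam : 0 < lam) (hσ : 0 < σ) (hp : 0 < p) (hp2 : p < 2)
    (g ℓ : ℝ → ℝ) (hg : Continuous g) (hℓ : Continuous ℓ)
    (hℓv : ∀ a b : ℝ, pVarBdd p ℓ a b)
    (hsol : ∀ s t : ℝ, s ≤ t →
      ℓ t - ℓ s = -lam * (∫ u in Set.Icc s t, ℓ u) + g t - g s)
    (s t : ℝ) (hst : s ≤ t) :
    RSInteg (fun u => 2 * σ ^ 2 * ℓ u) g s t
      ((σ * ℓ t) ^ 2 - (σ * ℓ s) ^ 2 + 2 * lam * ∫ u in Set.Icc s t, (σ * ℓ u) ^ 2) := by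
  intro ε hε
  obtain ⟨M, hM⟩ := (isCompact_Icc (a := s) (b := t)).exists_bound_of_continuousOn
    hℓ.continuousOn
  have hM0 : 0 ≤ M := le_trans (norm_nonneg _) (hM s (left_mem_Icc.mpr hst))
  obtain ⟨C, hC⟩ := hℓv s t
  have hCmono := mono_pvar ℓ p hp s t C hC
  -- choice of the modulus η
  set φ : ℝ → ℝ :=
    fun η => σ ^ 2 * (2 * η) ^ (2 - p) * 2 ^ p * C + 2 * lam * σ ^ 2 * M * η * (t - s)
    with hφdef
  have hφ0 : φ 0 = 0 := by
    simp [hφdef, Real.zero_rpow (show (2 : ℝ) - p ≠ 0 by intro h; nlinarith)]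
  have hφc : ContinuousAt φ 0 := by
    have h1 : ContinuousAt (fun η : ℝ => (2 * η) ^ (2 - p)) 0 := by
      have h2 : ContinuousAt (fun w : ℝ => w ^ (2 - p)) ((fun η : ℝ => 2 * η) 0) := by
        apply Real.continuousAt_rpow_const
        right; linarith
      exact h2.comp (by fun_prop)
    exact (((continuousAt_const.mul h1).mul continuousAt_const).mul continuousAt_const).add
      (by fun_prop)
  obtain ⟨δ₀, hδ₀, hball⟩ := Metric.continuousAt_iff.mp hφc ε hε
  set η := δ₀ / 2 with hηdef
  have hη0 : 0 < η := by positivity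
  have hφη : φ η < ε := by
    have h := hball (show dist η 0 < δ₀ by
      rw [Real.dist_eq, sub_zero, abs_of_pos hη0]; rw [hηdef]; linarith)
    rw [hφ0, Real.dist_eq, sub_zero] at h
    exact lt_of_le_of_lt (le_abs_self _) h
  -- uniform continuity
  obtain ⟨δ, hδ0, hδ⟩ := Metric.uniformContinuousOn_iff.mp
    ((isCompact_Icc (a := s) (b := t)).uniformContinuousOn_of_continuous hℓ.continuousOn)
    η hη0
  refine ⟨δ, hδ0, fun n x y hpart hmesh htags => ?_⟩
  obtain ⟨hx0, hxn, hxlt⟩ := hpart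
  have hpart' : IsPartition s t n x := ⟨hx0, hxn, hxlt⟩
  have hxmono := partition_mono hpart'
  have hxmem : ∀ i ≤ n, x i ∈ Set.Icc s t := fun i hi =>
    ⟨hx0 ▸ hxmono i hi 0 (Nat.zero_le _), hxn ▸ hxmono n le_rfl i hi⟩
  have hymem : ∀ i < n, y i ∈ Set.Icc s t := fun i hi =>
    ⟨le_trans (hxmem i hi.le).1 (htags i hi).1,
     le_trans (htags i hi).2 (hxmem (i + 1) hi).2⟩
  -- basic integrability
  have hZc : Continuous fun u => (σ * ℓ u) ^ 2 := by fun_prop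
  have hZi : ∀ a b : ℝ, IntervalIntegrable (fun u => (σ * ℓ u) ^ 2) volume a b :=
    fun a b => hZc.intervalIntegrable a b
  -- increments of g
  have hgd : ∀ i < n, g (x (i + 1)) - g (x i)
      = (ℓ (x (i + 1)) - ℓ (x i)) + lam * ∫ u in x i..x (i + 1), ℓ u := by
    intro i hi
    have hle := (hxlt i hi).le
    have h := hsol (x i) (x (i + 1)) hle
    rw [MeasureTheory.integral_Icc_eq_integral_Ioc,
      ← intervalIntegral.integral_of_le hle] at h
    linarith
  -- telescoping sums
  have htelZ : ∑ i ∈ Finset.range n, ((σ * ℓ (x (i + 1))) ^ 2 - (σ * ℓ (x i)) ^ 2)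
      = (σ * ℓ t) ^ 2 - (σ * ℓ s) ^ 2 := by
    rw [Finset.sum_range_sub (fun i => (σ * ℓ (x i)) ^ 2), hx0, hxn]
  have htelx : ∑ i ∈ Finset.range n, (x (i + 1) - x i) = t - s := by
    rw [Finset.sum_range_sub x, hx0, hxn]
  have hintZ : ∑ i ∈ Finset.range n, ∫ u in x i..x (i + 1), (σ * ℓ u) ^ 2
      = ∫ u in Set.Icc s t, (σ * ℓ u) ^ 2 := by
    rw [intervalIntegral.sum_integral_adjacent_intervals (fun i _ => hZi _ _), hx0, hxn,
      MeasureTheory.integral_Icc_eq_integral_Ioc, ← intervalIntegral.integral_of_le hst]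
  -- the error terms
  set E : ℕ → ℝ := fun i =>
    σ ^ 2 * (2 * ℓ (y i) - ℓ (x (i + 1)) - ℓ (x i)) * (ℓ (x (i + 1)) - ℓ (x i))
    + lam * ∫ u in x i..x (i + 1),
        (2 * σ ^ 2 * ℓ (y i) * ℓ u - 2 * (σ * ℓ u) ^ 2) with hEdef
  have hmain : RSSum (fun u => 2 * σ ^ 2 * ℓ u) g n x y
      - ((σ * ℓ t) ^ 2 - (σ * ℓ s) ^ 2 + 2 * lam * ∫ u in Set.Icc s t, (σ * ℓ u) ^ 2)
      = ∑ i ∈ Finset.range n, E i := by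
    rw [← htelZ, ← hintZ, RSSum, Finset.mul_sum, ← Finset.sum_add_distrib,
      ← Finset.sum_sub_distrib]
    refine Finset.sum_congr rfl fun i hi => ?_
    have hi' := Finset.mem_range.mp hi
    have hlin : ∫ u in x i..x (i + 1), (2 * σ ^ 2 * ℓ (y i) * ℓ u - 2 * (σ * ℓ u) ^ 2)
        = 2 * σ ^ 2 * ℓ (y i) * (∫ u in x i..x (i + 1), ℓ u)
          - 2 * ∫ u in x i..x (i + 1), (σ * ℓ u) ^ 2 := by
      rw [intervalIntegral.integral_sub ((by fun_prop : Continuous fun u =>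
          2 * σ ^ 2 * ℓ (y i) * ℓ u).intervalIntegrable _ _)
          ((by fun_prop : Continuous fun u => 2 * (σ * ℓ u) ^ 2).intervalIntegrable _ _),
        intervalIntegral.integral_const_mul, intervalIntegral.integral_const_mul]
    rw [hgd i hi', hEdef]
    simp only []
    rw [hlin]
    ring
  -- bounding each error term
  set K1 : ℝ := σ ^ 2 * (2 * η) ^ (2 - p) * 2 ^ p with hK1def
  set K2 : ℝ := 2 * lam * σ ^ 2 * M * η with hK2def
  have hK1nn : 0 ≤ K1 := by
    apply mul_nonneg (mul_nonneg (sq_nonneg σ) (Real.rpow_nonneg (by linarith) _))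
      (Real.rpow_nonneg (by norm_num) _)
  have hEbd : ∀ i < n, |E i|
      ≤ K1 * (|ℓ (y i) - ℓ (x i)| ^ p + |ℓ (x (i + 1)) - ℓ (y i)| ^ p)
        + K2 * (x (i + 1) - x i) := by
    intro i hi
    set u := |ℓ (y i) - ℓ (x i)| with hudef
    set v := |ℓ (x (i + 1)) - ℓ (y i)| with hvdef
    have hu0 : 0 ≤ u := abs_nonneg _
    have hv0 : 0 ≤ v := abs_nonneg _
    have hu : u ≤ η := by
      have hd : dist (y i) (x i) < δ := by
        rw [Real.dist_eq, abs_of_nonneg (by linarith [(htags i hi).1])]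
        linarith [(htags i hi).2, hmesh i hi]
      have := hδ (y i) (hymem i hi) (x i) (hxmem i hi.le) hd
      rw [Real.dist_eq] at this; exact this.le
    have hv : v ≤ η := by
      have hd : dist (x (i + 1)) (y i) < δ := by
        rw [Real.dist_eq, abs_of_nonneg (by linarith [(htags i hi).2])]
        linarith [(htags i hi).1, hmesh i hi]
      have := hδ (x (i + 1)) (hxmem (i + 1) hi) (y i) (hymem i hi) hd
      rw [Real.dist_eq] at this; exact this.le
    -- first term
    have ha : |2 * ℓ (y i) - ℓ (x (i + 1)) - ℓ (x i)| ≤ u + v := by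
      have h1 : 2 * ℓ (y i) - ℓ (x (i + 1)) - ℓ (x i)
          = (ℓ (y i) - ℓ (x i)) + (ℓ (y i) - ℓ (x (i + 1))) := by ring
      rw [h1]
      refine (abs_add_le _ _).trans ?_
      rw [abs_sub_comm (ℓ (y i)) (ℓ (x (i + 1)))]
    have hb : |ℓ (x (i + 1)) - ℓ (x i)| ≤ u + v := by
      have h1 : ℓ (x (i + 1)) - ℓ (x i)
          = (ℓ (x (i + 1)) - ℓ (y i)) + (ℓ (y i) - ℓ (x i)) := by ring
      rw [h1]
      refine (abs_add_le _ _).trans ?_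
      rw [← hudef, ← hvdef]; linarith
    have h1 : |σ ^ 2 * (2 * ℓ (y i) - ℓ (x (i + 1)) - ℓ (x i)) * (ℓ (x (i + 1)) - ℓ (x i))|
        ≤ σ ^ 2 * ((u + v) * (u + v)) := by
      rw [abs_mul, abs_mul, abs_of_nonneg (sq_nonneg σ), mul_assoc]
      apply mul_le_mul_of_nonneg_left ?_ (sq_nonneg σ)
      exact mul_le_mul ha hb (abs_nonneg _) (by linarith)
    have h2 : (u + v) * (u + v) ≤ (2 * η) ^ (2 - p) * (2 ^ p * (u ^ p + v ^ p)) := by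
      rcases eq_or_lt_of_le (add_nonneg hu0 hv0) with h0 | h0
      · have hu' : u = 0 := by linarith
        have hv' : v = 0 := by linarith
        rw [hu', hv', Real.zero_rpow (ne_of_gt hp)]
        simp
      · have e1 : (u + v) * (u + v) = (u + v) ^ (2 - p) * (u + v) ^ p := by
          rw [← Real.rpow_add h0, show (2 : ℝ) - p + p = 2 by ring, Real.rpow_two, sq]
        rw [e1]
        have e2 : (u + v) ^ (2 - p) ≤ (2 * η) ^ (2 - p) :=
          Real.rpow_le_rpow (by linarith) (by linarith) (by linarith)
        have e3 : (u + v) ^ p ≤ 2 ^ p * (u ^ p + v ^ p) := by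
          calc (u + v) ^ p ≤ (2 * max u v) ^ p := by
                apply Real.rpow_le_rpow (by linarith) ?_ hp.le
                rcases le_total u v with h | h
                · rw [max_eq_right h]; linarith
                · rw [max_eq_left h]; linarith
            _ = 2 ^ p * (max u v) ^ p :=
                Real.mul_rpow (by norm_num) (le_max_iff.mpr (Or.inl hu0))
            _ ≤ 2 ^ p * (u ^ p + v ^ p) := by
                apply mul_le_mul_of_nonneg_left ?_ (Real.rpow_nonneg (by norm_num) _)
                rcases max_cases u v with ⟨hm, _⟩ | ⟨hm, _⟩ <;> rw [hm]
                · nlinarith [Real.rpow_nonneg hv0 p]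
                · nlinarith [Real.rpow_nonneg hu0 p]
        calc (u + v) ^ (2 - p) * (u + v) ^ p
            ≤ (2 * η) ^ (2 - p) * (u + v) ^ p :=
              mul_le_mul_of_nonneg_right e2 (Real.rpow_nonneg (by linarith) _)
          _ ≤ (2 * η) ^ (2 - p) * (2 ^ p * (u ^ p + v ^ p)) :=
              mul_le_mul_of_nonneg_left e3 (Real.rpow_nonneg (by linarith) _)
    -- second term
    have hle := (hxlt i hi).le
    have hbdint : ∀ w ∈ Set.uIoc (x i) (x (i + 1)),
        ‖2 * σ ^ 2 * ℓ (y i) * ℓ w - 2 * (σ * ℓ w) ^ 2‖ ≤ 2 * σ ^ 2 * M * η := by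
      intro w hw
      rw [Set.uIoc_of_le hle] at hw
      have hwm : w ∈ Set.Icc s t :=
        ⟨le_trans (hxmem i hi.le).1 hw.1.le, le_trans hw.2 (hxmem (i + 1) hi).2⟩
      have hℓw : |ℓ w| ≤ M := by
        have := hM w hwm; rwa [Real.norm_eq_abs] at this
      have hclose : |ℓ (y i) - ℓ w| ≤ η := by
        have hd : dist (y i) w < δ := by
          rw [Real.dist_eq, abs_lt]
          constructor
          · linarith [(htags i hi).1, hw.2, hmesh i hi]
          · linarith [(htags i hi).2, hw.1, hmesh i hi]
        have := hδ (y i) (hymem i hi) w hwm hd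
        rw [Real.dist_eq] at this; exact this.le
      have he : 2 * σ ^ 2 * ℓ (y i) * ℓ w - 2 * (σ * ℓ w) ^ 2
          = 2 * σ ^ 2 * (ℓ w * (ℓ (y i) - ℓ w)) := by ring
      rw [he, Real.norm_eq_abs]
      calc |2 * σ ^ 2 * (ℓ w * (ℓ (y i) - ℓ w))|
          = 2 * σ ^ 2 * (|ℓ w| * |ℓ (y i) - ℓ w|) := by
            rw [abs_mul, abs_of_nonneg (by positivity : (0:ℝ) ≤ 2 * σ ^ 2), abs_mul]
        _ ≤ 2 * σ ^ 2 * (M * η) := by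
            apply mul_le_mul_of_nonneg_left ?_ (by positivity)
            exact mul_le_mul hℓw hclose (abs_nonneg _) hM0
        _ = 2 * σ ^ 2 * M * η := by ring
    have h3 : |lam * ∫ u in x i..x (i + 1),
        (2 * σ ^ 2 * ℓ (y i) * ℓ u - 2 * (σ * ℓ u) ^ 2)| ≤ K2 * (x (i + 1) - x i) := by
      rw [abs_mul, abs_of_pos hlam]
      have hnrm := intervalIntegral.norm_integral_le_of_norm_le_const hbdint
      rw [Real.norm_eq_abs, abs_of_nonneg (by linarith : (0:ℝ) ≤ x (i + 1) - x i)] at hnrm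
      calc lam * |∫ u in x i..x (i + 1),
            (2 * σ ^ 2 * ℓ (y i) * ℓ u - 2 * (σ * ℓ u) ^ 2)|
          ≤ lam * (2 * σ ^ 2 * M * η * (x (i + 1) - x i)) :=
            mul_le_mul_of_nonneg_left hnrm hlam.le
        _ = K2 * (x (i + 1) - x i) := by rw [hK2def]; ring
    calc |E i| ≤ |σ ^ 2 * (2 * ℓ (y i) - ℓ (x (i + 1)) - ℓ (x i))
          * (ℓ (x (i + 1)) - ℓ (x i))|
        + |lam * ∫ u in x i..x (i + 1),
            (2 * σ ^ 2 * ℓ (y i) * ℓ u - 2 * (σ * ℓ u) ^ 2)| := by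
          rw [hEdef]; exact abs_add_le _ _
      _ ≤ σ ^ 2 * ((2 * η) ^ (2 - p) * (2 ^ p * (u ^ p + v ^ p)))
          + K2 * (x (i + 1) - x i) := by
          refine add_le_add (h1.trans ?_) h3
          exact mul_le_mul_of_nonneg_left h2 (sq_nonneg σ)
      _ = K1 * (u ^ p + v ^ p) + K2 * (x (i + 1) - x i) := by rw [hK1def]; ring
  -- summing the p-variation terms via the interleaved partition
  have hW : ∑ i ∈ Finset.range n,
      (|ℓ (y i) - ℓ (x i)| ^ p + |ℓ (x (i + 1)) - ℓ (y i)| ^ p) ≤ C := by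
    set z : ℕ → ℝ := fun j => if j % 2 = 0 then x (j / 2) else y (j / 2) with hzdef
    have hz2 : ∀ i, z (2 * i) = x i := by
      intro i
      have h1 : (2 * i) % 2 = 0 := by omega
      have h2 : (2 * i) / 2 = i := by omega
      simp [hzdef, h1, h2]
    have hz21 : ∀ i, z (2 * i + 1) = y i := by
      intro i
      have h1 : (2 * i + 1) % 2 = 1 := by omega
      have h2 : (2 * i + 1) / 2 = i := by omega
      simp [hzdef, h1, h2]
    have := hCmono (2 * n) z (by rw [show (0:ℕ) = 2 * 0 by ring, hz2, hx0])
      (by rw [hz2, hxn]) ?_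
    · rw [sum_range_two_mul' (fun j => |ℓ (z (j + 1)) - ℓ (z j)| ^ p) n] at this
      refine le_trans (le_of_eq ?_) this
      refine Finset.sum_congr rfl fun i _ => ?_
      rw [hz2, hz21, show 2 * i + 1 + 1 = 2 * (i + 1) by ring, hz2]
    · intro j hj
      rcases Nat.even_or_odd j with ⟨i, hi⟩ | ⟨i, hi⟩
      · have hij : j = 2 * i := by omega
        subst hij
        rw [hz2, hz21]
        exact (htags i (by omega)).1
      · have hij : j = 2 * i + 1 := by omega
        subst hij
        rw [hz21, show 2 * i + 1 + 1 = 2 * (i + 1) by ring, hz2]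
        exact (htags i (by omega)).2
  -- conclusion
  rw [hmain]
  calc |∑ i ∈ Finset.range n, E i|
      ≤ ∑ i ∈ Finset.range n, |E i| := Finset.abs_sum_le_sum_abs _ _
    _ ≤ ∑ i ∈ Finset.range n,
        (K1 * (|ℓ (y i) - ℓ (x i)| ^ p + |ℓ (x (i + 1)) - ℓ (y i)| ^ p)
          + K2 * (x (i + 1) - x i)) :=
        Finset.sum_le_sum fun i hi => hEbd i (Finset.mem_range.mp hi)
    _ = K1 * (∑ i ∈ Finset.range n,
          (|ℓ (y i) - ℓ (x i)| ^ p + |ℓ (x (i + 1)) - ℓ (y i)| ^ p))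
        + K2 * (t - s) := by
        rw [Finset.sum_add_distrib, ← Finset.mul_sum, ← Finset.mul_sum, htelx]
    _ ≤ K1 * C + K2 * (t - s) := by
        have h1 : K1 * (∑ i ∈ Finset.range n,
            (|ℓ (y i) - ℓ (x i)| ^ p + |ℓ (x (i + 1)) - ℓ (y i)| ^ p)) ≤ K1 * C :=
          mul_le_mul_of_nonneg_left hW hK1nn
        linarith
    _ = φ η := by rw [hφdef, hK1def, hK2def]
    _ < ε := hφη

theorem stmt_16 (lam σ d p : ℝ) (hlam : 0 < lam) (hσ : 0 < σ)
    (hd : 0 < d) (hd2 : d < 1/2) (hp : 0 < p) (hp2 : p < 2)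
    (g ℓ Z : ℝ → ℝ) (hg : Continuous g) (hℓ : Continuous ℓ)
    (hgv : ∀ a b : ℝ, pVarBdd p g a b) (hℓv : ∀ a b : ℝ, pVarBdd p ℓ a b)
    (hsol : ∀ s t : ℝ, s ≤ t →
      ℓ t - ℓ s = -lam * (∫ u in Set.Icc s t, ℓ u) + g t - g s)
    (hZ : Z = fun t : ℝ => (σ * ℓ t) ^ 2) :
    (∀ s t : ℝ, s ≤ t →
      RSInteg (fun u => 2 * σ * Real.sqrt (Z u) * Real.sign (ℓ u)) g s t
        (Z t - Z s + 2 * lam * ∫ u in Set.Icc s t, Z u))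
    ∧ (∀ s t : ℝ, s ≤ t → (∀ u ∈ Set.Icc s t, 0 ≤ ℓ u) →
      RSInteg (fun u => 2 * σ * Real.sqrt (Z u)) g s t
        (Z t - Z s + 2 * lam * ∫ u in Set.Icc s t, Z u)) := by
  subst hZ
  have hsign : ∀ w : ℝ, Real.sign w * |w| = w := by
    intro w
    rcases lt_trichotomy w 0 with h | h | h
    · rw [Real.sign_of_neg h, abs_of_neg h]; ring
    · rw [h, Real.sign_zero, abs_zero]; ring
    · rw [Real.sign_of_pos h, abs_of_pos h]; ring
  constructor
  · intro s t hst
    have hkey := key_RSInteg lam σ p hlam hσ hp hp2 g ℓ hg hℓ hℓv hsol s t hst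
    exact RSInteg_congr (fun u _ => by
      show 2 * σ ^ 2 * ℓ u = 2 * σ * Real.sqrt ((σ * ℓ u) ^ 2) * Real.sign (ℓ u)
      rw [Real.sqrt_sq_eq_abs, abs_mul, abs_of_pos hσ]
      linear_combination (-(2 * σ ^ 2)) * hsign (ℓ u)) hkey
  · intro s t hst hpos
    have hkey := key_RSInteg lam σ p hlam hσ hp hp2 g ℓ hg hℓ hℓv hsol s t hst
    exact RSInteg_congr (fun u hu => by
      show 2 * σ ^ 2 * ℓ u = 2 * σ * Real.sqrt ((σ * ℓ u) ^ 2)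
      rw [Real.sqrt_sq (mul_nonneg hσ.le (hpos u hu))]
      ring) hkey
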